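/- (Transference of uncertainty inequalities.) Let (Ω,d,μ) be a metric measure space with μ(Ω) = ∞ whose isoperimetric profile I₁ is concave, continuous, increasing, I₁(0) = 0, and strictly positive on (0,∞), and assume the co-area inequality ∫_0^{∞} I₁(μ{|g| > s}) ds ≤ ∫_Ω |∇g| dμ holds for every Lipschitz g with compact support. Let I₂ : [0,∞) → [0,∞) satisfy I₂(t) ≤ I₁(t) for all t, and let w : Ω → (0,∞) be measurable with C₂ := sup_{r>0} μ{w ≤ r}/(r·I₂(μ{w ≤ r})) < ∞ (with I₂ > 0 on (0,∞)). Then w is an isoperimetric weight for (Ω,d,μ) with constant at most C₂, and for every Lipschitz f with compact support with |∇f| and wf integrable, ∫_Ω |f| dμ ≤ 3·(2C₂)^{1/2}·(∫_Ω |∇f| dμ)^{1/2}·(∫_Ω w|f| dμ)^{1/2}. -/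

import Mathlib

open MeasureTheory Filter Set Topology
open scoped ENNReal NNReal

/-- The modulus of the gradient of `f` at `x`:
`|∇f|(x) = limsup_{y→x} |f(x) - f(y)| / d(x,y)`. -/
noncomputable def gradMod {Ω : Type*} [MetricSpace Ω] (f : Ω → ℝ) (x : Ω) : ℝ :=
  Filter.limsup (fun y => |f x - f y| / dist x y) (𝓝[≠] x)

lemma gradMod_nonneg' {Ω : Type*} [MetricSpace Ω] (f : Ω → ℝ) (x : Ω) : 0 ≤ gradMod f x := by
  unfold gradMod
  rw [Filter.limsup_eq]
  by_cases hb : (𝓝[≠] x) = ⊥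
  · rw [hb]
    have : {a : ℝ | ∀ᶠ n in (⊥ : Filter Ω), |f x - f n| / dist x n ≤ a} = univ := by
      ext a; simp
    rw [this, Real.sInf_of_not_bddBelow]
    rintro ⟨b, hbb⟩
    have := hbb (mem_univ (b - 1))
    linarith
  · haveI : (𝓝[≠] x).NeBot := ⟨hb⟩
    apply Real.sInf_nonneg
    intro a ha
    have ha' : ∀ᶠ n in 𝓝[≠] x, |f x - f n| / dist x n ≤ a := ha
    obtain ⟨y, hy⟩ := ha'.exists
    exact le_trans (div_nonneg (abs_nonneg _) dist_nonneg) hy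

/-- The Minkowski content (perimeter) of a set `A`:
`μ⁺(A) = liminf_{h→0⁺} (μ(A_h) - μ(A))/h`, where `A_h` is the open `h`-thickening of `A`. -/
noncomputable def minkContent {Ω : Type*} [MetricSpace Ω] [MeasurableSpace Ω]
    (μ : Measure Ω) (A : Set Ω) : ℝ≥0∞ :=
  Filter.liminf (fun h : ℝ => (μ (Metric.thickening h A) - μ A) / ENNReal.ofReal h)
    (𝓝[>] (0 : ℝ))

/-- The isoperimetric profile of `(Ω,d,μ)`:
`I(t) = inf {μ⁺(A) : A Borel, μ(A) = t}`. -/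
noncomputable def isoProfile {Ω : Type*} [MetricSpace Ω] [MeasurableSpace Ω]
    (μ : Measure Ω) (t : ℝ≥0∞) : ℝ≥0∞ :=
  ⨅ (A : Set Ω) (_ : MeasurableSet A) (_ : μ A = t), minkContent μ A

/-- `m` is a median of `f` with respect to `μ`. -/
def IsMedian {Ω : Type*} [MeasurableSpace Ω] (μ : Measure Ω) (f : Ω → ℝ) (m : ℝ) : Prop :=
  μ Set.univ / 2 ≤ μ {x | m ≤ f x} ∧ μ Set.univ / 2 ≤ μ {x | f x ≤ m}

/-- **transference of uncertainty inequalities.**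
Let `(Ω,d,μ)` have infinite measure, isoperimetric profile `I₁` (concave, continuous,
increasing, zero at zero, positive on `(0,∞)`) and satisfy the co-area inequality for
every compactly supported Lipschitz function. If `I₂ ≤ I₁` and `w` satisfies
`μ{w ≤ r} ≤ C₂ r I₂(μ{w ≤ r})` for all `r > 0`, then `w` is an isoperimetric weight for
`(Ω,d,μ)` with constant at most `C₂`, and for every compactly supported Lipschitz `f`
with `|∇f|` and `w f` integrable,
`∫ |f| dμ ≤ 3 (2C₂)^{1/2} (∫ |∇f| dμ)^{1/2} (∫ w |f| dμ)^{1/2}`. -/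
theorem transference_uncertainty {Ω : Type*} [MetricSpace Ω] [MeasurableSpace Ω]
    [BorelSpace Ω] (μ : Measure Ω) [IsFiniteMeasureOnCompacts μ]
    (hμ : μ Set.univ = ⊤)
    (I₁ : ℝ → ℝ)
    (hIprof : ∀ t : ℝ, 0 ≤ t →
      ENNReal.ofReal (I₁ t) = isoProfile μ (ENNReal.ofReal t))
    (hIconc : ConcaveOn ℝ (Set.Ici 0) I₁)
    (hIcont : ContinuousOn I₁ (Set.Ici 0))
    (hImono : MonotoneOn I₁ (Set.Ici 0))
    (hI0 : I₁ 0 = 0)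
    (hIpos : ∀ t : ℝ, 0 < t → 0 < I₁ t)
    (hcoarea : ∀ (K : ℝ≥0) (g : Ω → ℝ), LipschitzWith K g → HasCompactSupport g →
      ∫⁻ s in Set.Ioi (0:ℝ), ENNReal.ofReal (I₁ ((μ {x | s < |g x|}).toReal)) ≤
        ENNReal.ofReal (∫ x, gradMod g x ∂μ))
    (I₂ : ℝ → ℝ)
    (hI₂le : ∀ t : ℝ, 0 ≤ t → I₂ t ≤ I₁ t)
    (hI₂pos : ∀ t : ℝ, 0 < t → 0 < I₂ t)
    (w : Ω → ℝ) (hw_meas : Measurable w) (hw_pos : ∀ x, 0 < w x)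
    (C₂ : ℝ) (hC₂ : 0 < C₂)
    (hw₂ : ∀ r : ℝ, 0 < r →
      μ {x | w x ≤ r} ≤ ENNReal.ofReal (C₂ * r * I₂ ((μ {x | w x ≤ r}).toReal))) :
    (∀ r : ℝ, 0 < r →
      μ {x | w x ≤ r} ≤ ENNReal.ofReal (C₂ * r * I₁ ((μ {x | w x ≤ r}).toReal))) ∧
    ∀ (K : ℝ≥0) (f : Ω → ℝ), LipschitzWith K f → HasCompactSupport f →
      Integrable (gradMod f) μ → Integrable (fun x => w x * f x) μ →
      ∫ x, |f x| ∂μ ≤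
        3 * (2 * C₂) ^ ((1:ℝ)/2) * (∫ x, gradMod f x ∂μ) ^ ((1:ℝ)/2) *
          (∫ x, w x * |f x| ∂μ) ^ ((1:ℝ)/2) := by
  have hI1nn : ∀ t : ℝ, 0 ≤ t → 0 ≤ I₁ t := by
    intro t ht
    have := hImono (self_mem_Ici) (mem_Ici.mpr ht) ht
    linarith [hI0 ▸ this]
  constructor
  · intro r hr
    refine (hw₂ r hr).trans (ENNReal.ofReal_le_ofReal ?_)
    exact mul_le_mul_of_nonneg_left (hI₂le _ ENNReal.toReal_nonneg)
      (by positivity)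
  · intro K f hf hfs hgrad hwf
    set A := ∫ x, gradMod f x ∂μ with hAdef
    set B := ∫ x, w x * |f x| ∂μ with hBdef
    have hA : 0 ≤ A := integral_nonneg fun x => gradMod_nonneg' f x
    have hB : 0 ≤ B := integral_nonneg fun x => mul_nonneg (hw_pos x).le (abs_nonneg _)
    have hfc : Continuous f := hf.continuous
    have hfm : Measurable fun x => |f x| := hfc.abs.measurable
    set ν := μ.withDensity (fun x => ENNReal.ofReal (w x)) with hνdef
    -- finiteness of superlevel sets
    have hTfin : ∀ s : ℝ, 0 < s → μ {x | s < |f x|} ≠ ⊤ := by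
      intro s hs
      have hsub : {x | s < |f x|} ⊆ tsupport f := by
        intro x hx
        apply subset_tsupport
        intro h0
        simp only [mem_setOf_eq, h0, abs_zero] at hx
        linarith
      exact ne_top_of_le_ne_top hfs.measure_lt_top.ne (measure_mono hsub)
    -- pointwise (in s) estimate
    have key : ∀ r : ℝ, 0 < r → ∀ s ∈ Ioi (0:ℝ),
        μ {x | s < |f x|} ≤
          ENNReal.ofReal (C₂ * r) * ENNReal.ofReal (I₁ ((μ {x | s < |f x|}).toReal))
            + (ENNReal.ofReal r)⁻¹ * ν {x | s < |f x|} := by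
      intro r hr s hs
      set X := {x : Ω | s < |f x|} with hXdef
      have hXmeas : MeasurableSet X := measurableSet_lt measurable_const hfm
      have hXfin : μ X ≠ ⊤ := hTfin s hs
      have hMfin : μ {x | w x ≤ r} ≠ ⊤ :=
        ne_top_of_le_ne_top ENNReal.ofReal_ne_top (hw₂ r hr)
      have split : μ X ≤ μ (X ∩ {x | w x ≤ r}) + μ (X ∩ {x | r < w x}) := by
        have hsub : X ⊆ (X ∩ {x | w x ≤ r}) ∪ (X ∩ {x | r < w x}) := by
          intro x hx
          by_cases h : w x ≤ r
          · exact Or.inl ⟨hx, h⟩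
          · exact Or.inr ⟨hx, lt_of_not_ge h⟩
        exact (measure_mono hsub).trans (measure_union_le _ _)
      have h2 : μ (X ∩ {x | r < w x}) ≤ (ENNReal.ofReal r)⁻¹ * ν X := by
        have hSm : MeasurableSet (X ∩ {x | r < w x}) :=
          hXmeas.inter (measurableSet_lt measurable_const hw_meas)
        have hν : ENNReal.ofReal r * μ (X ∩ {x | r < w x}) ≤ ν X := by
          calc ENNReal.ofReal r * μ (X ∩ {x | r < w x})
              = ∫⁻ _ in X ∩ {x | r < w x}, ENNReal.ofReal r ∂μ :=
                (setLIntegral_const _ _).symm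
            _ ≤ ∫⁻ x in X ∩ {x | r < w x}, ENNReal.ofReal (w x) ∂μ :=
                setLIntegral_mono hw_meas.ennreal_ofReal
                  (fun x hx => ENNReal.ofReal_le_ofReal hx.2.le)
            _ = ν (X ∩ {x | r < w x}) := (withDensity_apply _ hSm).symm
            _ ≤ ν X := measure_mono inter_subset_left
        rw [← ENNReal.div_eq_inv_mul]
        rw [ENNReal.le_div_iff_mul_le (Or.inl (ENNReal.ofReal_pos.mpr hr).ne')
          (Or.inl ENNReal.ofReal_ne_top)]
        rwa [mul_comm]
      have h1 : μ (X ∩ {x | w x ≤ r}) ≤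
          ENNReal.ofReal (C₂ * r) * ENNReal.ofReal (I₁ ((μ X).toReal)) := by
        rcases le_total (μ {x | w x ≤ r}) (μ X) with hMT | hTM
        · calc μ (X ∩ {x | w x ≤ r}) ≤ μ {x | w x ≤ r} := measure_mono inter_subset_right
            _ ≤ ENNReal.ofReal (C₂ * r * I₂ ((μ {x | w x ≤ r}).toReal)) := hw₂ r hr
            _ ≤ ENNReal.ofReal (C₂ * r) * ENNReal.ofReal (I₁ ((μ X).toReal)) := by
                rw [← ENNReal.ofReal_mul (by positivity)]
                apply ENNReal.ofReal_le_ofReal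
                have e1 : I₂ ((μ {x | w x ≤ r}).toReal) ≤ I₁ ((μ {x | w x ≤ r}).toReal) :=
                  hI₂le _ ENNReal.toReal_nonneg
                have e2 : I₁ ((μ {x | w x ≤ r}).toReal) ≤ I₁ ((μ X).toReal) :=
                  hImono (mem_Ici.mpr ENNReal.toReal_nonneg)
                    (mem_Ici.mpr ENNReal.toReal_nonneg)
                    ((ENNReal.toReal_le_toReal hMfin hXfin).mpr hMT)
                exact mul_le_mul_of_nonneg_left (e1.trans e2) (by positivity)
        · refine le_trans (measure_mono inter_subset_left) ?_
          rcases eq_or_ne (μ X) 0 with h0 | h0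
          · rw [h0]; exact zero_le
          · set t := (μ X).toReal with htdef
            set m := (μ {x | w x ≤ r}).toReal with hmdef
            have htpos : 0 < t := ENNReal.toReal_pos h0 hXfin
            have hmt : t ≤ m := (ENNReal.toReal_le_toReal hXfin hMfin).mpr hTM
            have hmpos : 0 < m := lt_of_lt_of_le htpos hmt
            have hw' : m ≤ C₂ * r * I₂ m :=
              ENNReal.toReal_le_of_le_ofReal
                (by have := (hI₂pos m hmpos).le; positivity) (hw₂ r hr)
            have hI2I1 : I₂ m ≤ I₁ m := hI₂le m hmpos.le
            have hconc : (t / m) * I₁ m ≤ I₁ t := by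
              have h := hIconc.2 (mem_Ici.mpr hmpos.le) (mem_Ici.mpr (le_refl (0:ℝ)))
                (show (0:ℝ) ≤ t / m by positivity)
                (show (0:ℝ) ≤ 1 - t / m by
                  rw [sub_nonneg]; exact div_le_one_of_le₀ hmt hmpos.le)
                (show t / m + (1 - t / m) = 1 by ring)
              simp only [smul_eq_mul, hI0, mul_zero, add_zero] at h
              have hpt : t / m * m = t := by field_simp
              rw [hpt] at h
              linarith
            have ht : t ≤ C₂ * r * I₁ t := by
              have step1 : m * (t / m) ≤ (C₂ * r * I₁ m) * (t / m) :=
                mul_le_mul_of_nonneg_right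
                  (hw'.trans (mul_le_mul_of_nonneg_left hI2I1 (by positivity)))
                  (by positivity)
              have step2 : (C₂ * r * I₁ m) * (t / m) = C₂ * r * ((t / m) * I₁ m) := by ring
              have step3 : C₂ * r * ((t / m) * I₁ m) ≤ C₂ * r * I₁ t :=
                mul_le_mul_of_nonneg_left hconc (by positivity)
              have step0 : m * (t / m) = t := by field_simp
              linarith [step0 ▸ step1, step2 ▸ step3]
            calc μ X = ENNReal.ofReal t := (ENNReal.ofReal_toReal hXfin).symm
              _ ≤ ENNReal.ofReal (C₂ * r * I₁ t) := ENNReal.ofReal_le_ofReal ht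
              _ = ENNReal.ofReal (C₂ * r) * ENNReal.ofReal (I₁ t) :=
                  ENNReal.ofReal_mul (by positivity)
      exact split.trans (add_le_add h1 h2)
    -- measurability in s
    have hTanti : Antitone (fun s : ℝ => μ {x | s < |f x|}) := by
      intro a b hab
      exact measure_mono fun x hx => lt_of_le_of_lt hab hx
    have hVanti : Antitone (fun s : ℝ => ν {x | s < |f x|}) := by
      intro a b hab
      exact measure_mono fun x hx => lt_of_le_of_lt hab hx
    have hTm : Measurable fun s : ℝ => μ {x | s < |f x|} := hTanti.measurable
    have hVm : Measurable fun s : ℝ => ν {x | s < |f x|} := hVanti.measurable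
    have hJc : Continuous fun t : ℝ => I₁ (max t 0) :=
      hIcont.comp_continuous (continuous_id.max continuous_const)
        (fun t => mem_Ici.mpr (le_max_right _ _))
    have hIm : Measurable fun s : ℝ =>
        ENNReal.ofReal (I₁ ((μ {x | s < |f x|}).toReal)) := by
      have heq : (fun s : ℝ => ENNReal.ofReal (I₁ ((μ {x | s < |f x|}).toReal)))
          = fun s : ℝ => ENNReal.ofReal ((fun t => I₁ (max t 0))
              ((μ {x | s < |f x|}).toReal)) := by
        funext s
        simp [max_eq_left ENNReal.toReal_nonneg]
      rw [heq]
      exact (hJc.measurable.comp (ENNReal.measurable_toReal.comp hTm)).ennreal_ofReal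
    -- integrability of w * |f|
    have hwfInt : Integrable (fun x => w x * |f x|) μ := by
      apply hwf.abs.congr
      filter_upwards with x
      rw [abs_mul, abs_of_pos (hw_pos x)]
    -- the master inequality
    have master : ∀ r : ℝ, 0 < r →
        ∫⁻ x, ENNReal.ofReal |f x| ∂μ ≤ ENNReal.ofReal (C₂ * r * A + B / r) := by
      intro r hr
      have hL : ∫⁻ x, ENNReal.ofReal |f x| ∂μ = ∫⁻ s in Ioi (0:ℝ), μ {x | s < |f x|} :=
        lintegral_eq_lintegral_meas_lt μ (ae_of_all _ fun x => abs_nonneg _)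
          hfm.aemeasurable
      have hV : ∫⁻ s in Ioi (0:ℝ), ν {x | s < |f x|} = ENNReal.ofReal B := by
        rw [← lintegral_eq_lintegral_meas_lt ν (ae_of_all _ fun x => abs_nonneg _)
          hfm.aemeasurable]
        rw [hνdef, lintegral_withDensity_eq_lintegral_mul μ hw_meas.ennreal_ofReal
          hfm.ennreal_ofReal]
        rw [hBdef, ofReal_integral_eq_lintegral_ofReal hwfInt
          (ae_of_all _ fun x => mul_nonneg (hw_pos x).le (abs_nonneg _))]
        apply lintegral_congr
        intro x
        simp [ENNReal.ofReal_mul (hw_pos x).le]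
      calc ∫⁻ x, ENNReal.ofReal |f x| ∂μ
          = ∫⁻ s in Ioi (0:ℝ), μ {x | s < |f x|} := hL
        _ ≤ ∫⁻ s in Ioi (0:ℝ),
              (ENNReal.ofReal (C₂ * r) * ENNReal.ofReal (I₁ ((μ {x | s < |f x|}).toReal))
                + (ENNReal.ofReal r)⁻¹ * ν {x | s < |f x|}) :=
            setLIntegral_mono ((hIm.const_mul _).add (hVm.const_mul _)) (key r hr)
        _ = ENNReal.ofReal (C₂ * r) *
              (∫⁻ s in Ioi (0:ℝ), ENNReal.ofReal (I₁ ((μ {x | s < |f x|}).toReal)))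
            + (ENNReal.ofReal r)⁻¹ * ∫⁻ s in Ioi (0:ℝ), ν {x | s < |f x|} := by
            rw [lintegral_add_left (hIm.const_mul _), lintegral_const_mul _ hIm,
              lintegral_const_mul _ hVm]
        _ ≤ ENNReal.ofReal (C₂ * r) * ENNReal.ofReal A
            + (ENNReal.ofReal r)⁻¹ * ENNReal.ofReal B := by
            refine add_le_add (mul_le_mul_right ?_ _) (le_of_eq (by rw [hV]))
            exact hcoarea K f hf hfs
        _ = ENNReal.ofReal (C₂ * r * A + B / r) := by
            rw [← ENNReal.ofReal_mul (by positivity), ← ENNReal.div_eq_inv_mul,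
              ← ENNReal.ofReal_div_of_pos hr,
              ← ENNReal.ofReal_add (by positivity) (by positivity)]
    -- reduce to real inequality
    have hIf : ∫ x, |f x| ∂μ = (∫⁻ x, ENNReal.ofReal |f x| ∂μ).toReal :=
      integral_eq_lintegral_of_nonneg_ae (ae_of_all _ fun x => abs_nonneg _)
        hfc.abs.aestronglyMeasurable
    have final : ∀ r : ℝ, 0 < r → ∫ x, |f x| ∂μ ≤ C₂ * r * A + B / r := by
      intro r hr
      rw [hIf]
      exact ENNReal.toReal_le_of_le_ofReal (by positivity) (master r hr)
    -- conclusion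
    rw [show ((1:ℝ)/2) = (1 / (2:ℝ)) by norm_num, ← Real.sqrt_eq_rpow,
      ← Real.sqrt_eq_rpow, ← Real.sqrt_eq_rpow]
    rcases eq_or_lt_of_le hA with hA0 | hA0
    · have h0 : ∫ x, |f x| ∂μ ≤ 0 := by
        apply le_of_forall_gt_imp_ge_of_dense
        intro ε hε
        have hfin := final ((B + 1) / ε) (by positivity)
        rw [← hA0, mul_zero, zero_add] at hfin
        refine hfin.trans ?_
        rw [div_div_eq_mul_div, div_le_iff₀ (by positivity)]
        nlinarith
      exact h0.trans (by positivity)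
    · rcases eq_or_lt_of_le hB with hB0 | hB0
      · have h0 : ∫ x, |f x| ∂μ ≤ 0 := by
          apply le_of_forall_gt_imp_ge_of_dense
          intro ε hε
          have hfin := final (ε / (C₂ * A)) (by positivity)
          rw [← hB0, zero_div, add_zero] at hfin
          refine hfin.trans (le_of_eq ?_)
          field_simp
        exact h0.trans (by positivity)
      · set sa := Real.sqrt A with hsadef
        set sb := Real.sqrt B with hsbdef
        set sc := Real.sqrt C₂ with hscdef
        have hsa : 0 < sa := Real.sqrt_pos.mpr hA0
        have hsb : 0 < sb := Real.sqrt_pos.mpr hB0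
        have hsc : 0 < sc := Real.sqrt_pos.mpr hC₂
        have hsa2 : sa * sa = A := Real.mul_self_sqrt hA
        have hsb2 : sb * sb = B := Real.mul_self_sqrt hB
        have hsc2 : sc * sc = C₂ := Real.mul_self_sqrt hC₂.le
        have hfin := final (sb / (sc * sa)) (by positivity)
        have hval : C₂ * (sb / (sc * sa)) * A + B / (sb / (sc * sa))
            = 2 * (sc * sa * sb) := by
          rw [← hsa2, ← hsb2, ← hsc2]
          field_simp
          ring
        rw [hval] at hfin
        refine hfin.trans ?_
        have h2C : Real.sqrt (2 * C₂) = Real.sqrt 2 * sc := Real.sqrt_mul (by norm_num) C₂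
        rw [h2C]
        have hs2 : (1:ℝ) ≤ Real.sqrt 2 := by
          rw [show (1:ℝ) = Real.sqrt 1 by simp]
          exact Real.sqrt_le_sqrt (by norm_num)
        nlinarith [mul_pos (mul_pos hsc hsa) hsb]
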